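/- arXiv:2112.12325 — 6 statements merged into one kernel-verified Lean document; each statement's English description precedes it below -/
import Mathlib

section
/- Let z : ℝ → EuclideanSpace ℝ (Fin 3) be differentiable with z(t) ≠ 0 for all t ≥ 0 and z'(t) = −Ω(t) ×₃ z(t) − v(t) for all t ≥ 0. Let ξ : ℝ → ℝ be differentiable with ξ'(t) = −⟪y(t), v(t)⟫ for all t ≥ 0, where y(t) := ‖z(t)‖⁻¹ • z(t), and let θ := ‖z(0)‖ − ξ(0). Then for all t ≥ 0, ‖z(t)‖ − ξ(t) = θ, and consequently z(t) = (ξ(t) + θ) • y(t). -/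
open scoped RealInnerProductSpace

lemma hasDerivAt_norm_aux {F : Type*} [NormedAddCommGroup F] [InnerProductSpace ℝ F]
    {f : ℝ → F} {f' : F} {x : ℝ} (hf : HasDerivAt f f' x) (h0 : f x ≠ 0) :
    HasDerivAt (fun t => ‖f t‖) (⟪f x, f'⟫ / ‖f x‖) x := by
  have hne : (‖f x‖ : ℝ) ≠ 0 := norm_ne_zero_iff.mpr h0
  have hsq : (‖f x‖ ^ 2 : ℝ) ≠ 0 := pow_ne_zero _ hne
  have h1 : HasDerivAt (fun t => Real.sqrt (‖f t‖ ^ 2))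
      (1 / (2 * Real.sqrt (‖f x‖ ^ 2)) * (2 * ⟪f x, f'⟫)) x :=
    (Real.hasDerivAt_sqrt hsq).comp x hf.norm_sq
  have heq : (fun t => Real.sqrt (‖f t‖ ^ 2)) = fun t => ‖f t‖ := by
    funext t; exact Real.sqrt_sq (norm_nonneg _)
  rw [heq] at h1
  convert h1 using 1
  rw [Real.sqrt_sq (norm_nonneg _)]
  field_simp

/-- Cross product on `EuclideanSpace ℝ (Fin 3)`, transported from Mathlib's
`crossProduct` on `Fin 3 → ℝ`. -/
noncomputable def cross3 (a b : EuclideanSpace ℝ (Fin 3)) : EuclideanSpace ℝ (Fin 3) :=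
  (WithLp.equiv 2 (Fin 3 → ℝ)).symm
    (crossProduct ((WithLp.equiv 2 (Fin 3 → ℝ)) a) ((WithLp.equiv 2 (Fin 3 → ℝ)) b))

theorem stmt1 (z Ω v : ℝ → EuclideanSpace ℝ (Fin 3)) (ξ : ℝ → ℝ)
    (hz : Differentiable ℝ z)
    (hz0 : ∀ t ≥ (0:ℝ), z t ≠ 0)
    (hzd : ∀ t ≥ (0:ℝ), deriv z t = -cross3 (Ω t) (z t) - v t)
    (y : ℝ → EuclideanSpace ℝ (Fin 3)) (hy : y = fun t => ‖z t‖⁻¹ • z t)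
    (hξ : Differentiable ℝ ξ)
    (hξd : ∀ t ≥ (0:ℝ), deriv ξ t = -⟪y t, v t⟫)
    (θ : ℝ) (hθ : θ = ‖z 0‖ - ξ 0) :
    ∀ t ≥ (0:ℝ), ‖z t‖ - ξ t = θ ∧ z t = (ξ t + θ) • y t := by
  have key : ∀ s ≥ (0:ℝ), HasDerivAt (fun r => ‖z r‖ - ξ r) 0 s := by
    intro s hs
    have hzs : HasDerivAt z (deriv z s) s := (hz s).hasDerivAt
    have hn : HasDerivAt (fun r => ‖z r‖) (⟪z s, deriv z s⟫ / ‖z s‖) s :=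
      hasDerivAt_norm_aux hzs (hz0 s hs)
    have hξs : HasDerivAt ξ (deriv ξ s) s := (hξ s).hasDerivAt
    have hcr : ⟪z s, cross3 (Ω s) (z s)⟫ = 0 := by
      have : ⟪z s, cross3 (Ω s) (z s)⟫ =
          dotProduct ((WithLp.equiv 2 (Fin 3 → ℝ)) (z s))
            (crossProduct ((WithLp.equiv 2 (Fin 3 → ℝ)) (Ω s))
              ((WithLp.equiv 2 (Fin 3 → ℝ)) (z s))) := by
        simp [cross3, PiLp.inner_apply, RCLike.inner_apply, dotProduct,
          WithLp.equiv, conj_trivial]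
        exact Finset.sum_congr rfl (fun i _ => mul_comm _ _)
      rw [this, dot_cross_self]
    have hval : ⟪z s, deriv z s⟫ / ‖z s‖ - deriv ξ s = 0 := by
      rw [hzd s hs, hξd s hs, hy]
      simp only [inner_sub_right, inner_neg_right, hcr, neg_zero, zero_sub,
        real_inner_smul_left]
      have hne : (‖z s‖ : ℝ) ≠ 0 := norm_ne_zero_iff.mpr (hz0 s hs)
      field_simp
      ring
    have := hn.sub hξs
    rwa [hval] at this
  intro t ht
  have hconst : ‖z t‖ - ξ t = ‖z 0‖ - ξ 0 := by
    have hcont : ContinuousOn (fun r => ‖z r‖ - ξ r) (Set.Icc 0 t) :=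
      ((hz.continuous.norm.sub hξ.continuous)).continuousOn
    have := constant_of_has_deriv_right_zero (f := fun r => ‖z r‖ - ξ r) hcont
      (fun x hx => (key x hx.1).hasDerivWithinAt) t (Set.mem_Icc.mpr ⟨ht, le_refl t⟩)
    exact this
  have h1 : ‖z t‖ - ξ t = θ := by rw [hconst, hθ]
  refine ⟨h1, ?_⟩
  have h2 : ξ t + θ = ‖z t‖ := by linarith
  rw [h2, hy]
  have hne : (‖z t‖ : ℝ) ≠ 0 := norm_ne_zero_iff.mpr (hz0 t ht)
  rw [smul_smul, mul_inv_cancel₀ hne, one_smul]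
end

section
/- Let z : ℝ → EuclideanSpace ℝ (Fin 3) be differentiable with z(t) ≠ 0 for all t ≥ 0 and z'(t) = −Ω(t) ×₃ z(t) − v(t) for all t ≥ 0. Then the bearing y(t) := ‖z(t)‖⁻¹ • z(t) is differentiable at each t ≥ 0 with derivative y'(t) = −Ω(t) ×₃ y(t) − ‖z(t)‖⁻¹ • (v(t) − ⟪y(t), v(t)⟫ • y(t)); equivalently, ‖z(t)‖ • (y'(t) + Ω(t) ×₃ y(t)) = −(v(t) − ⟪y(t), v(t)⟫ • y(t)). -/
open scoped RealInnerProductSpace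

open Matrix in
lemma inner_cross3_self (a b : EuclideanSpace ℝ (Fin 3)) : ⟪b, cross3 a b⟫ = 0 := by
  have h := dot_cross_self ((WithLp.equiv 2 (Fin 3 → ℝ)) a) ((WithLp.equiv 2 (Fin 3 → ℝ)) b)
  simpa [cross3, PiLp.inner_apply, dotProduct, RCLike.inner_apply, conj_trivial, mul_comm] using h

lemma cross3_smul (a b : EuclideanSpace ℝ (Fin 3)) (c : ℝ) :
    cross3 a (c • b) = c • cross3 a b := by
  simp [cross3]

theorem stmt2 (z Ω v : ℝ → EuclideanSpace ℝ (Fin 3))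
    (hz : Differentiable ℝ z)
    (hz0 : ∀ t ≥ (0:ℝ), z t ≠ 0)
    (hzd : ∀ t ≥ (0:ℝ), deriv z t = -cross3 (Ω t) (z t) - v t)
    (y : ℝ → EuclideanSpace ℝ (Fin 3)) (hy : y = fun t => ‖z t‖⁻¹ • z t) :
    ∀ t ≥ (0:ℝ),
      HasDerivAt y
        (-cross3 (Ω t) (y t) - ‖z t‖⁻¹ • (v t - ⟪y t, v t⟫ • y t)) t ∧
      ‖z t‖ • (deriv y t + cross3 (Ω t) (y t)) = -(v t - ⟪y t, v t⟫ • y t) := by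
  intro t ht
  have hzt := hz0 t ht
  set r : ℝ := ‖z t‖ with hr
  have hr0 : r ≠ 0 := norm_ne_zero_iff.mpr hzt
  set w : EuclideanSpace ℝ (Fin 3) := deriv z t with hw
  have hdz : HasDerivAt z w t := (hz t).hasDerivAt
  -- derivative of the norm
  have hinner : HasDerivAt (fun s => ⟪z s, z s⟫) (2 * ⟪z t, w⟫) t := by
    have h2 := hdz.inner ℝ hdz
    have h3 : ⟪z t, w⟫ + ⟪w, z t⟫ = 2 * ⟪z t, w⟫ := by
      rw [real_inner_comm w (z t)]
      ring
    rw [h3] at h2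
    exact h2
  have hinner0 : ⟪z t, z t⟫ ≠ 0 := by
    rw [real_inner_self_eq_norm_sq]
    positivity
  have hsqrt : HasDerivAt (fun s => ‖z s‖) (⟪z t, w⟫ / r) t := by
    have h := hinner.sqrt hinner0
    have heq : (fun s => Real.sqrt ⟪z s, z s⟫) = fun s => ‖z s‖ := by
      funext s
      rw [real_inner_self_eq_norm_sq, Real.sqrt_sq (norm_nonneg _)]
    have hval : Real.sqrt ⟪z t, z t⟫ = r := by
      rw [real_inner_self_eq_norm_sq, Real.sqrt_sq (norm_nonneg _)]
    rw [heq, hval, mul_div_mul_left _ _ (two_ne_zero)] at h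
    exact h
  have hinv : HasDerivAt (fun s => ‖z s‖⁻¹) (-(⟪z t, w⟫ / r) / r ^ 2) t :=
    hsqrt.inv hr0
  have hyD : HasDerivAt y (r⁻¹ • w + (-(⟪z t, w⟫ / r) / r ^ 2) • z t) t := by
    rw [hy]
    exact hinv.smul hdz
  have hwz : ⟪z t, w⟫ = -⟪z t, v t⟫ := by
    rw [hw, hzd t ht, inner_sub_right, inner_neg_right, inner_cross3_self]
    ring
  have hyv : ⟪y t, v t⟫ = r⁻¹ * ⟪z t, v t⟫ := by
    simp only [hy]
    rw [real_inner_smul_left]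
  have hDeq : r⁻¹ • w + (-(⟪z t, w⟫ / r) / r ^ 2) • z t
      = -cross3 (Ω t) (y t) - r⁻¹ • (v t - ⟪y t, v t⟫ • y t) := by
    rw [hwz, hyv]
    rw [hw, hzd t ht]
    simp only [hy, cross3_smul]
    match_scalars <;> (field_simp; (try ring); (try tauto))
  rw [hDeq] at hyD
  refine ⟨hyD, ?_⟩
  rw [hyD.deriv]
  have : -cross3 (Ω t) (y t) - r⁻¹ • (v t - ⟪y t, v t⟫ • y t) + cross3 (Ω t) (y t)
      = -(r⁻¹ • (v t - ⟪y t, v t⟫ • y t)) := by abel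
  rw [this, smul_neg, smul_smul, mul_inv_cancel₀ hr0, one_smul]
end

section
/- (Swapping lemma, exact ODE form.) Let α > 0 and let x, y : ℝ → ℝ be differentiable. Suppose a, b, c : ℝ → ℝ are differentiable and satisfy for all t ≥ 0: a'(t) = −α a(t) + α x(t) y(t), b'(t) = −α b(t) + α x(t), c'(t) = −α c(t) + y'(t) b(t), together with the initial condition a(0) = y(0) b(0) − c(0). Then a(t) = y(t) b(t) − c(t) for all t ≥ 0. -/
/-- Swapping lemma (Lemma 1), exact ODE form: with state-space realizations
`a` of `(α/(p+α))[x·y]`, `b` of `(α/(p+α))[x]` and `c` of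
`(1/(p+α))[ẏ·(α/(p+α))[x]]`, matched initial conditions give
`a = y·b − c` for all `t ≥ 0`. -/
theorem stmt3 (α : ℝ) (hα : 0 < α) (x y a b c : ℝ → ℝ)
    (hx : Differentiable ℝ x) (hy : Differentiable ℝ y)
    (ha : Differentiable ℝ a) (hb : Differentiable ℝ b) (hc : Differentiable ℝ c)
    (had : ∀ t ≥ (0:ℝ), deriv a t = -α * a t + α * (x t * y t))
    (hbd : ∀ t ≥ (0:ℝ), deriv b t = -α * b t + α * x t)
    (hcd : ∀ t ≥ (0:ℝ), deriv c t = -α * c t + deriv y t * b t)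
    (h0 : a 0 = y 0 * b 0 - c 0) :
    ∀ t ≥ (0:ℝ), a t = y t * b t - c t := by
  set e : ℝ → ℝ := fun t => a t - (y t * b t - c t) with he
  have hed : Differentiable ℝ e := by
    apply ha.sub ((hy.mul hb).sub hc)
  have hderiv : ∀ t ≥ (0:ℝ), deriv e t = -α * e t := by
    intro t ht
    have : deriv e t = deriv a t - ((deriv y t * b t + y t * deriv b t) - deriv c t) := by
      rw [he]
      rw [deriv_fun_sub (g := fun t => y t * b t - c t) (ha t) ((hy.mul hb).sub hc t),
        deriv_fun_sub (f := fun t => y t * b t) ((hy t).mul (hb t)) (hc t), deriv_fun_mul (hy t) (hb t)]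
    rw [this, had t ht, hbd t ht, hcd t ht]
    simp only [he]
    ring
  set g : ℝ → ℝ := fun t => Real.exp (α * t) * e t with hg
  have hgd : ∀ t ≥ (0:ℝ), HasDerivAt g 0 t := by
    intro t ht
    have h1 : HasDerivAt (fun t => Real.exp (α * t)) (α * Real.exp (α * t)) t := by
      have := (Real.hasDerivAt_exp (α * t)).comp t ((hasDerivAt_id t).const_mul α)
      simpa [mul_comm, Function.comp_def] using this
    have h2 : HasDerivAt e (deriv e t) t := (hed t).hasDerivAt
    have := h1.fun_mul h2
    rw [hderiv t ht] at this
    convert this using 1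
    · rfl
    · rfl
    ring
  intro t ht
  have key : ∀ s ∈ Set.Icc (0:ℝ) t, g s = g 0 := by
    apply constant_of_has_deriv_right_zero
    · exact (Continuous.mul (by continuity) hed.continuous).continuousOn
    · intro s hs
      exact (hgd s hs.1).hasDerivWithinAt
  have h0' : g 0 = 0 := by simp [hg, he, h0]
  have := key t ⟨ht, le_refl t⟩
  rw [h0'] at this
  have hexp : Real.exp (α * t) ≠ 0 := Real.exp_ne_zero _
  have : e t = 0 := by
    have := this
    simp only [hg] at this
    exact (mul_eq_zero.mp this).resolve_left hexp
  simpa [he, sub_eq_zero] using this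
end

section
/- Let u : ℝ → ℝ be continuous with u(t) ≥ 0 for all t ≥ 0, and suppose there exist T > 0 and δ > 0 such that ∫_t^{t+T} u(s) ds ≥ δ for all t ≥ 0 (persistency of excitation). Let γ > 0 and let x : ℝ → EuclideanSpace ℝ (Fin n) be differentiable with x'(t) = −γ u(t) • x(t) for all t ≥ 0. Then ‖x(t)‖ ≤ ‖x(0)‖ · exp(γδ) · exp(−(γδ/T) t) for all t ≥ 0. -/
open MeasureTheory intervalIntegral Set

/-- Exponential stability of `ẋ = −γ u(t) x` for a nonnegative persistently
exciting scalar gain `u`. -/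
theorem stmt5 {n : ℕ} (u : ℝ → ℝ) (hu : Continuous u)
    (hu0 : ∀ t ≥ (0:ℝ), 0 ≤ u t)
    (T δ : ℝ) (hT : 0 < T) (hδ : 0 < δ)
    (hPE : ∀ t ≥ (0:ℝ), δ ≤ ∫ s in t..(t + T), u s)
    (γ : ℝ) (hγ : 0 < γ)
    (x : ℝ → EuclideanSpace ℝ (Fin n)) (hx : Differentiable ℝ x)
    (hxd : ∀ t ≥ (0:ℝ), deriv x t = (-(γ * u t)) • x t) :
    ∀ t ≥ (0:ℝ),
      ‖x t‖ ≤ ‖x 0‖ * Real.exp (γ * δ) * Real.exp (-(γ * δ / T) * t) := by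
  set U : ℝ → ℝ := fun t => ∫ s in (0:ℝ)..t, u s with hUdef
  have hUder : ∀ t : ℝ, HasDerivAt U (u t) t := fun t =>
    integral_hasDerivAt_right (hu.intervalIntegrable _ _)
      hu.stronglyMeasurable.stronglyMeasurableAtFilter hu.continuousAt
  have hUcont : Continuous U := by
    exact continuous_iff_continuousAt.2 fun t => (hUder t).continuousAt
  -- the function y is constant on [0, ∞)
  set y : ℝ → EuclideanSpace ℝ (Fin n) := fun t => Real.exp (γ * U t) • x t with hydef
  have hyder : ∀ s ≥ (0:ℝ), HasDerivAt y 0 s := by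
    intro s hs
    have hexp : HasDerivAt (fun t => Real.exp (γ * U t)) (γ * u s * Real.exp (γ * U s)) s := by
      have := (((hUder s).const_mul γ).exp)
      simpa [mul_comm] using this
    have hxs : HasDerivAt x ((-(γ * u s)) • x s) s := by
      have := (hx s).hasDerivAt
      rwa [hxd s hs] at this
    have h := hexp.smul hxs
    have hz : (γ * u s * Real.exp (γ * U s)) • x s
        + Real.exp (γ * U s) • ((-(γ * u s)) • x s) = 0 := by
      rw [smul_smul, ← add_smul]
      have : γ * u s * Real.exp (γ * U s) + Real.exp (γ * U s) * -(γ * u s) = 0 := by ring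
      rw [this, zero_smul]
    rw [add_comm] at hz
    rwa [hz] at h
  have hycont : Continuous y := by
    exact ((Real.continuous_exp.comp (continuous_const.mul hUcont)).smul hx.continuous)
  have hyconst : ∀ t ≥ (0:ℝ), y t = y 0 := by
    intro t ht
    exact constant_of_has_deriv_right_zero (hycont.continuousOn)
      (fun s hs => (hyder s hs.1).hasDerivWithinAt) t ⟨ht, le_refl t⟩
  have hU0 : U 0 = 0 := by simp [hUdef]
  -- norm formula
  have hnorm : ∀ t ≥ (0:ℝ), ‖x t‖ = Real.exp (-(γ * U t)) * ‖x 0‖ := by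
    intro t ht
    have h := hyconst t ht
    have h0 : y 0 = x 0 := by simp [hydef, hU0]
    rw [h0] at h
    have := congrArg norm h
    rw [norm_smul, Real.norm_eq_abs, abs_of_pos (Real.exp_pos _)] at this
    have hexpne : Real.exp (γ * U t) ≠ 0 := (Real.exp_pos _).ne'
    field_simp [Real.exp_neg] at this ⊢
    rw [Real.exp_neg, ← this, mul_comm (Real.exp _) ‖x t‖, mul_inv_cancel_right₀ hexpne]
  -- lower bound on U
  have hUmono : ∀ s t : ℝ, 0 ≤ s → s ≤ t → U s ≤ U t := by
    intro s t hs hst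
    have hadd : U s + ∫ r in s..t, u r = U t :=
      integral_add_adjacent_intervals (hu.intervalIntegrable _ _) (hu.intervalIntegrable _ _)
    have hnn : 0 ≤ ∫ r in s..t, u r :=
      intervalIntegral.integral_nonneg hst (fun r hr => hu0 r (le_trans hs hr.1))
    linarith
  have hstep : ∀ k : ℕ, (k:ℝ) * δ ≤ U ((k:ℝ) * T) := by
    intro k
    induction k with
    | zero => simp [hU0]
    | succ k ih =>
      have hk0 : (0:ℝ) ≤ (k:ℝ) * T := by positivity
      have hadd : U ((k:ℝ) * T) + ∫ r in ((k:ℝ)*T)..((k:ℝ)*T + T), u r = U ((k:ℝ)*T + T) :=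
        integral_add_adjacent_intervals (hu.intervalIntegrable _ _) (hu.intervalIntegrable _ _)
      have hpe := hPE ((k:ℝ)*T) hk0
      have : ((k:ℝ)+1) * δ ≤ U ((k:ℝ)*T + T) := by linarith
      have heq : ((k:ℝ)+1) * T = (k:ℝ)*T + T := by ring
      push_cast
      rw [heq]
      exact this
  have hUlb : ∀ t ≥ (0:ℝ), δ * (t / T - 1) ≤ U t := by
    intro t ht
    set k := ⌊t / T⌋₊ with hk
    have htT : 0 ≤ t / T := div_nonneg ht hT.le
    have hkle : (k:ℝ) * T ≤ t := by
      have := Nat.floor_le htT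
      calc (k:ℝ) * T ≤ (t / T) * T := by nlinarith
        _ = t := by field_simp
    have hklt : t / T < (k:ℝ) + 1 := Nat.lt_floor_add_one _
    have h1 : δ * (t / T - 1) ≤ (k:ℝ) * δ := by nlinarith
    have h2 : (k:ℝ) * δ ≤ U ((k:ℝ) * T) := hstep k
    have h3 : U ((k:ℝ) * T) ≤ U t := hUmono _ _ (by positivity) hkle
    linarith
  -- conclude
  intro t ht
  rw [hnorm t ht, mul_assoc, ← Real.exp_add]
  have hexp : Real.exp (-(γ * U t)) ≤ Real.exp (γ * δ + -(γ * δ / T) * t) := by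
    apply Real.exp_le_exp.2
    have := hUlb t ht
    have hTne : T ≠ 0 := hT.ne'
    have : δ * t / T - δ ≤ U t := by
      have h := hUlb t ht
      calc δ * t / T - δ = δ * (t / T - 1) := by field_simp
        _ ≤ U t := h
    have h4 : γ * (δ * t / T - δ) ≤ γ * U t := mul_le_mul_of_nonneg_left this hγ.le
    have heq : γ * δ / T * t = γ * (δ * t / T) := by ring
    nlinarith [h4, heq]
  calc Real.exp (-(γ * U t)) * ‖x 0‖ ≤ Real.exp (γ * δ + -(γ * δ / T) * t) * ‖x 0‖ := by
        exact mul_le_mul_of_nonneg_right hexp (norm_nonneg _)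
    _ = ‖x 0‖ * Real.exp (γ * δ + -(γ * δ / T) * t) := by ring
end

section
/- Let S : ℝ → Matrix (Fin 3) (Fin 3) ℝ satisfy S(t)ᵀ = −S(t) for all t ≥ 0, let R, Q : ℝ → Matrix (Fin 3) (Fin 3) ℝ be differentiable with R'(t) = R(t) * S(t) and Q'(t) = Q(t) * S(t) for all t ≥ 0, and suppose Q(0) * Q(0)ᵀ = 1 (Q(0) is orthogonal). Then Q(t) * Q(t)ᵀ = 1 for all t ≥ 0, and for every g ∈ (Fin 3 → ℝ) and all t ≥ 0, R(t)ᵀ *ᵥ g = Q(t)ᵀ *ᵥ g_c, where g_c := (Q(0) * R(0)ᵀ) *ᵥ g. -/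
open Matrix

attribute [local instance] Matrix.normedAddCommGroup Matrix.normedSpace

namespace Stmt13Aux

abbrev M := Matrix (Fin 3) (Fin 3) ℝ

/-- Matrix multiplication as a continuous bilinear map. -/
noncomputable def L : M →L[ℝ] M →L[ℝ] M :=
  LinearMap.toContinuousLinearMap
    { toFun := fun A => LinearMap.toContinuousLinearMap (LinearMap.mulLeft ℝ A)
      map_add' := by
        intro A B; ext C i j
        simp [LinearMap.mulLeft_apply, add_mul]
      map_smul' := by
        intro c A; ext C i j
        simp [LinearMap.mulLeft_apply] }

@[simp] lemma L_apply (A B : M) : L A B = A * B := rfl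

/-- Transpose as a continuous linear map. -/
noncomputable def T : M →L[ℝ] M :=
  LinearMap.toContinuousLinearMap
    { toFun := fun A => Aᵀ
      map_add' := by intro A B; simp [Matrix.transpose_add]
      map_smul' := by intro c A; simp }

@[simp] lemma T_apply (A : M) : T A = Aᵀ := rfl

lemma hasDerivAt_mul_transpose {f g : ℝ → M} {f' g' : M} {t : ℝ}
    (hf : HasDerivAt f f' t) (hg : HasDerivAt g g' t) :
    HasDerivAt (fun s => f s * (g s)ᵀ) (f' * (g t)ᵀ + f t * g'ᵀ) t := by
  have hgT : HasDerivAt (fun s => (g s)ᵀ) g'ᵀ t := by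
    exact (T.hasFDerivAt.comp_hasDerivAt t hg :)
  have hfL := L.hasDerivAt_of_bilinear (fun _ => hf) (fun _ => hgT)
  rw [add_comm]
  exact (hfL :)

lemma const_of_deriv_zero (f : ℝ → M) (hf : Differentiable ℝ f)
    (h : ∀ t ≥ (0:ℝ), deriv f t = 0) : ∀ t ≥ (0:ℝ), f t = f 0 := by
  intro t ht
  rcases eq_or_lt_of_le ht with h0 | h0
  · rw [← h0]
  · refine constant_of_derivWithin_zero (f := f) (a := 0) (b := t)
      (hf.differentiableOn) ?_ t (Set.right_mem_Icc.2 ht)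
    intro x hx
    rw [DifferentiableAt.derivWithin (hf x)
      ((uniqueDiffOn_Icc h0) x (Set.mem_Icc.2 ⟨hx.1, le_of_lt hx.2⟩))]
    exact h x hx.1

end Stmt13Aux

open Stmt13Aux

/-- Reparameterization of the gravity term (proof of Proposition 4): `Q`
stays orthogonal and `R(t)ᵀ g = Q(t)ᵀ g_c` with the constant vector
`g_c := Q(0) R(0)ᵀ g`. -/
theorem stmt13 (S R Q : ℝ → Matrix (Fin 3) (Fin 3) ℝ)
    (hS : ∀ t ≥ (0:ℝ), (S t)ᵀ = -S t)
    (hR : Differentiable ℝ R) (hQ : Differentiable ℝ Q)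
    (hRd : ∀ t ≥ (0:ℝ), deriv R t = R t * S t)
    (hQd : ∀ t ≥ (0:ℝ), deriv Q t = Q t * S t)
    (hQ0 : Q 0 * (Q 0)ᵀ = 1) :
    ∀ t ≥ (0:ℝ), Q t * (Q t)ᵀ = 1 ∧
      ∀ g : Fin 3 → ℝ, (R t)ᵀ *ᵥ g = (Q t)ᵀ *ᵥ ((Q 0 * (R 0)ᵀ) *ᵥ g) := by
  -- derivative of products with Qᵀ
  have key : ∀ (F : ℝ → M), Differentiable ℝ F → (∀ t ≥ (0:ℝ), deriv F t = F t * S t) →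
      (∀ t ≥ (0:ℝ), F t * (Q t)ᵀ = F 0 * (Q 0)ᵀ) := by
    intro F hF hFd
    have hdiff : Differentiable ℝ (fun s => F s * (Q s)ᵀ) := by
      intro x
      exact (hasDerivAt_mul_transpose (hF x).hasDerivAt (hQ x).hasDerivAt).differentiableAt
    have hder0 : ∀ t ≥ (0:ℝ), deriv (fun s => F s * (Q s)ᵀ) t = 0 := by
      intro t ht
      have h1 : HasDerivAt (fun s => F s * (Q s)ᵀ)
          (deriv F t * (Q t)ᵀ + F t * (deriv Q t)ᵀ) t :=
        hasDerivAt_mul_transpose (hF t).hasDerivAt (hQ t).hasDerivAt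
      rw [show deriv (fun s => F s * (Q s)ᵀ) t = _ from h1.deriv, hFd t ht, hQd t ht, Matrix.transpose_mul, hS t ht]
      simp [Matrix.mul_assoc, Matrix.mul_neg]
    exact const_of_deriv_zero _ hdiff hder0
  have hQQ : ∀ t ≥ (0:ℝ), Q t * (Q t)ᵀ = 1 := by
    intro t ht
    rw [key Q hQ hQd t ht, hQ0]
  have hRQ : ∀ t ≥ (0:ℝ), R t * (Q t)ᵀ = R 0 * (Q 0)ᵀ := key R hR hRd
  intro t ht
  refine ⟨hQQ t ht, fun g => ?_⟩
  have hQQ' : (Q t)ᵀ * Q t = 1 := mul_eq_one_comm.mp (hQQ t ht)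
  have hc : Q 0 * (R 0)ᵀ = Q t * (R t)ᵀ := by
    have := congrArg Matrix.transpose (hRQ t ht)
    simpa [Matrix.transpose_mul] using this.symm
  rw [hc, Matrix.mulVec_mulVec, ← Matrix.mul_assoc, hQQ', Matrix.one_mul]
end

section
/- Let u : ℝ → ℝ be continuous with u(t) ≥ 0 for all t ≥ 0, and suppose there exist T > 0 and δ > 0 such that ∫_t^{t+T} u(s) ds ≥ δ for all t ≥ 0. Let γ > 0, and let ε : ℝ → EuclideanSpace ℝ (Fin n) be continuous with ‖ε(t)‖ ≤ a * Real.exp(−b t) for all t ≥ 0, for some a ≥ 0 and b > 0. If x : ℝ → EuclideanSpace ℝ (Fin n) is differentiable with x'(t) = −γ u(t) • x(t) + ε(t) for all t ≥ 0, then there exist M > 0 and λ > 0 such that ‖x(t)‖ ≤ M * Real.exp(−λ t) for all t ≥ 0; in particular x(t) → 0 as t → ∞. -/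
open Filter intervalIntegral Real

set_option maxHeartbeats 1000000 in
/-- A persistently excited scalar-gain LTV system perturbed by an
exponentially decaying input still converges to zero exponentially
(Appendix A, proof of Proposition 2). -/
theorem stmt19 {n : ℕ} (u : ℝ → ℝ) (hu : Continuous u)
    (hu0 : ∀ t ≥ (0:ℝ), 0 ≤ u t)
    (T δ : ℝ) (hT : 0 < T) (hδ : 0 < δ)
    (hPE : ∀ t ≥ (0:ℝ), δ ≤ ∫ s in t..(t + T), u s)
    (γ : ℝ) (hγ : 0 < γ)
    (ε : ℝ → EuclideanSpace ℝ (Fin n)) (hε : Continuous ε)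
    (a b : ℝ) (ha : 0 ≤ a) (hb : 0 < b)
    (hεbd : ∀ t ≥ (0:ℝ), ‖ε t‖ ≤ a * Real.exp (-b * t))
    (x : ℝ → EuclideanSpace ℝ (Fin n)) (hx : Differentiable ℝ x)
    (hxd : ∀ t ≥ (0:ℝ), deriv x t = (-(γ * u t)) • x t + ε t) :
    (∃ M > (0:ℝ), ∃ lam > (0:ℝ),
      ∀ t ≥ (0:ℝ), ‖x t‖ ≤ M * Real.exp (-lam * t)) ∧
    Filter.Tendsto x Filter.atTop (nhds 0) := by
  set U : ℝ → ℝ := fun t => ∫ s in (0:ℝ)..t, u s with hUdef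
  have hUd : ∀ t, HasDerivAt U (u t) t := fun t =>
    (hu.integral_hasStrictDerivAt 0 t).hasDerivAt
  have hUc : Continuous U :=
    continuous_iff_continuousAt.2 fun t => (hUd t).continuousAt
  have hUsub : ∀ s t : ℝ, U t - U s = ∫ r in s..t, u r := by
    intro s t
    rw [hUdef]
    exact intervalIntegral.integral_interval_sub_left
      (hu.intervalIntegrable _ _) (hu.intervalIntegrable _ _)
  have hUmono : ∀ s t : ℝ, 0 ≤ s → s ≤ t → U s ≤ U t := by
    intro s t hs hst
    have h0 : 0 ≤ U t - U s := by
      rw [hUsub]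
      exact intervalIntegral.integral_nonneg hst fun r hr => hu0 r (hs.trans hr.1)
    linarith
  have hstep : ∀ k : ℕ, ∀ s : ℝ, 0 ≤ s → (k : ℝ) * δ ≤ U (s + k * T) - U s := by
    intro k
    induction k with
    | zero => intro s hs; simp
    | succ k ih =>
      intro s hs
      have h1 : δ ≤ U (s + T) - U s := by rw [hUsub]; exact hPE s hs
      have h2 : (k : ℝ) * δ ≤ U (s + T + k * T) - U (s + T) := ih (s + T) (by linarith)
      have heq : s + T + k * T = s + (k + 1 : ℕ) * T := by push_cast; ring
      rw [heq] at h2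
      push_cast at h2 ⊢
      nlinarith
  -- key exponential decay of the transition factor
  set lam0 : ℝ := γ * δ / T with hlam0
  have hlam0pos : 0 < lam0 := by positivity
  have hkey : ∀ s t : ℝ, 0 ≤ s → s ≤ t →
      Real.exp (-(γ * (U t - U s))) ≤ Real.exp (γ * δ) * Real.exp (-(lam0 * (t - s))) := by
    intro s t hs hst
    set k : ℕ := ⌊(t - s) / T⌋₊ with hk
    have hts : 0 ≤ t - s := by linarith
    have hk1 : (k : ℝ) * T ≤ t - s := by
      have := Nat.floor_le (a := (t - s) / T) (by positivity)
      calc (k : ℝ) * T ≤ (t - s) / T * T := by nlinarith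
        _ = t - s := by field_simp
    have hk2 : (t - s) / T < (k : ℝ) + 1 := Nat.lt_floor_add_one _
    have h3 : (k : ℝ) * δ ≤ U (s + k * T) - U s := hstep k s hs
    have h4 : U (s + k * T) ≤ U t := hUmono _ _ (by positivity) (by linarith)
    have h5 : lam0 * (t - s) - γ * δ ≤ γ * (U t - U s) := by
      have hkd : lam0 * (t - s) ≤ γ * δ * ((k : ℝ) + 1) := by
        rw [hlam0]
        have : (t - s) ≤ ((k : ℝ) + 1) * T := by
          calc t - s = (t - s) / T * T := by field_simp
            _ ≤ ((k : ℝ) + 1) * T := by nlinarith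
        calc γ * δ / T * (t - s) ≤ γ * δ / T * (((k : ℝ) + 1) * T) := by
              apply mul_le_mul_of_nonneg_left this (by positivity)
          _ = γ * δ * ((k : ℝ) + 1) := by field_simp
      nlinarith
    rw [← Real.exp_add]
    apply Real.exp_le_exp.2
    linarith
  -- transform: y t = exp (γ U t) • x t
  set c : ℝ → ℝ := fun t => Real.exp (γ * U t) with hcdef
  have hcpos : ∀ t, 0 < c t := fun t => Real.exp_pos _
  have hcc : Continuous c := Real.continuous_exp.comp (continuous_const.mul hUc)
  have hcd : ∀ t, HasDerivAt c (c t * (γ * u t)) t := fun t =>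
    ((hUd t).const_mul γ).exp
  have hU0 : U 0 = 0 := by simp [hUdef]
  have hc0 : c 0 = 1 := by simp [hcdef, hU0]
  have hFTC : ∀ t : ℝ, 0 ≤ t → c t • x t - x 0 = ∫ s in (0:ℝ)..t, c s • ε s := by
    intro t ht
    have hderiv : ∀ s ∈ Set.uIcc (0:ℝ) t,
        HasDerivAt (fun r => c r • x r) (c s • ε s) s := by
      intro s hsmem
      rw [Set.uIcc_of_le ht] at hsmem
      have hs0 : 0 ≤ s := hsmem.1
      have h := (hcd s).smul (hx s).hasDerivAt
      rw [hxd s hs0] at h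
      refine h.congr_deriv ?_
      rw [smul_add, smul_smul, add_right_comm, ← add_smul]
      simp
    have hint : IntervalIntegrable (fun s => c s • ε s) MeasureTheory.volume 0 t :=
      (hcc.smul hε).intervalIntegrable _ _
    have := intervalIntegral.integral_eq_sub_of_hasDerivAt hderiv hint
    rw [this, hc0, one_smul]
  -- bound for lam
  set lam : ℝ := min lam0 b / 2 with hlam
  have hlampos : 0 < lam := by
    have := lt_min hlam0pos hb
    positivity
  have hlamlt : lam < b := by
    have h1 : min lam0 b ≤ b := min_le_right _ _
    have := lt_min hlam0pos hb
    rw [hlam]; linarith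
  have hlamle : lam ≤ lam0 := by
    have h1 : min lam0 b ≤ lam0 := min_le_left _ _
    have := lt_min hlam0pos hb
    rw [hlam]; linarith
  set C : ℝ := Real.exp (γ * δ) with hC
  have hCpos : 0 < C := Real.exp_pos _
  -- main norm bound
  have hbd : ∀ t : ℝ, 0 ≤ t →
      ‖x t‖ ≤ (C * (‖x 0‖ + a / (b - lam))) * Real.exp (-lam * t) := by
    intro t ht
    have hblam : 0 < b - lam := by linarith
    have hxt : c t • x t = x 0 + ∫ s in (0:ℝ)..t, c s • ε s := by
      have h := hFTC t ht
      rw [sub_eq_iff_eq_add] at h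
      rw [h]; abel
    have hnorm1 : c t * ‖x t‖ ≤ ‖x 0‖ + ∫ s in (0:ℝ)..t, c s * ‖ε s‖ := by
      calc c t * ‖x t‖ = ‖c t • x t‖ := by
            rw [norm_smul, Real.norm_eq_abs, abs_of_pos (hcpos t)]
        _ ≤ ‖x 0‖ + ‖∫ s in (0:ℝ)..t, c s • ε s‖ := by rw [hxt]; exact norm_add_le _ _
        _ ≤ ‖x 0‖ + ∫ s in (0:ℝ)..t, ‖c s • ε s‖ := by
            gcongr
            exact intervalIntegral.norm_integral_le_integral_norm ht
        _ = ‖x 0‖ + ∫ s in (0:ℝ)..t, c s * ‖ε s‖ := by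
            congr 1
            apply intervalIntegral.integral_congr
            intro s _
            show ‖c s • ε s‖ = c s * ‖ε s‖
            rw [norm_smul, Real.norm_eq_abs, abs_of_pos (hcpos s)]
    have hx2 : ‖x t‖ ≤ (c t)⁻¹ * ‖x 0‖ + (c t)⁻¹ * ∫ s in (0:ℝ)..t, c s * ‖ε s‖ := by
      have h := mul_le_mul_of_nonneg_left hnorm1 (le_of_lt (inv_pos.2 (hcpos t)))
      rw [← mul_assoc, inv_mul_cancel₀ (ne_of_gt (hcpos t)), one_mul] at h
      calc ‖x t‖ ≤ (c t)⁻¹ * (‖x 0‖ + ∫ s in (0:ℝ)..t, c s * ‖ε s‖) := h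
        _ = (c t)⁻¹ * ‖x 0‖ + (c t)⁻¹ * ∫ s in (0:ℝ)..t, c s * ‖ε s‖ := by ring
    -- first term
    have hcinv : ∀ s, 0 ≤ s → s ≤ t → (c t)⁻¹ * c s ≤ C * Real.exp (-(lam0 * (t - s))) := by
      intro s hs hst
      have : (c t)⁻¹ * c s = Real.exp (-(γ * (U t - U s))) := by
        rw [hcdef]
        simp only
        rw [← Real.exp_neg, ← Real.exp_add]
        ring_nf
      rw [this]
      exact hkey s t hs hst
    have hterm1 : (c t)⁻¹ * ‖x 0‖ ≤ C * ‖x 0‖ * Real.exp (-lam * t) := by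
      have h1 : (c t)⁻¹ ≤ C * Real.exp (-(lam0 * (t - 0))) := by
        have := hcinv 0 le_rfl ht
        rwa [hc0, mul_one] at this
      have h2 : Real.exp (-(lam0 * (t - 0))) ≤ Real.exp (-lam * t) := by
        apply Real.exp_le_exp.2
        have : lam * t ≤ lam0 * t := mul_le_mul_of_nonneg_right hlamle ht
        nlinarith
      calc (c t)⁻¹ * ‖x 0‖ ≤ (C * Real.exp (-lam * t)) * ‖x 0‖ := by
            apply mul_le_mul_of_nonneg_right _ (norm_nonneg _)
            exact h1.trans (by nlinarith [Real.exp_pos (-lam * t)])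
        _ = C * ‖x 0‖ * Real.exp (-lam * t) := by ring
    -- second term
    have hterm2 : (c t)⁻¹ * (∫ s in (0:ℝ)..t, c s * ‖ε s‖)
        ≤ C * a * Real.exp (-lam * t) * (1 / (b - lam)) := by
      have hmono : (∫ s in (0:ℝ)..t, (c t)⁻¹ * (c s * ‖ε s‖))
          ≤ ∫ s in (0:ℝ)..t, (C * a * Real.exp (-lam * t)) * Real.exp (-((b - lam) * s)) := by
        apply intervalIntegral.integral_mono_on ht
        · exact ((continuous_const.mul (hcc.mul hε.norm)).intervalIntegrable _ _)
        · exact ((continuous_const.mul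
            (Real.continuous_exp.comp (continuous_const.mul continuous_id).neg)).intervalIntegrable _ _)
        · intro s hsm
          obtain ⟨hs0, hst⟩ := hsm
          have h1 : (c t)⁻¹ * (c s * ‖ε s‖) = ((c t)⁻¹ * c s) * ‖ε s‖ := by ring
          rw [h1]
          have h2 : ((c t)⁻¹ * c s) * ‖ε s‖
              ≤ (C * Real.exp (-(lam0 * (t - s)))) * (a * Real.exp (-b * s)) := by
            apply mul_le_mul (hcinv s hs0 hst) (hεbd s hs0) (norm_nonneg _)
            positivity
          refine h2.trans ?_
          have h3 : Real.exp (-(lam0 * (t - s))) * Real.exp (-b * s)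
              ≤ Real.exp (-lam * t) * Real.exp (-((b - lam) * s)) := by
            rw [← Real.exp_add, ← Real.exp_add]
            apply Real.exp_le_exp.2
            have : lam * (t - s) ≤ lam0 * (t - s) :=
              mul_le_mul_of_nonneg_right hlamle (by linarith)
            nlinarith
          calc (C * Real.exp (-(lam0 * (t - s)))) * (a * Real.exp (-b * s))
              = (C * a) * (Real.exp (-(lam0 * (t - s))) * Real.exp (-b * s)) := by ring
            _ ≤ (C * a) * (Real.exp (-lam * t) * Real.exp (-((b - lam) * s))) := by
                apply mul_le_mul_of_nonneg_left h3 (by positivity)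
            _ = (C * a * Real.exp (-lam * t)) * Real.exp (-((b - lam) * s)) := by ring
      have hintexp : (∫ s in (0:ℝ)..t, Real.exp (-((b - lam) * s))) ≤ 1 / (b - lam) := by
        have hder : ∀ s ∈ Set.uIcc (0:ℝ) t,
            HasDerivAt (fun r => -(1 / (b - lam)) * Real.exp (-((b - lam)) * r))
              (Real.exp (-((b - lam) * s))) s := by
          intro s _
          have h1 : HasDerivAt (fun r : ℝ => -(b - lam) * r) (-(b - lam)) s := by
            simpa using (hasDerivAt_id s).const_mul (-(b - lam))
          have h2 := (h1.exp).const_mul (-(1 / (b - lam)))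
          have h3 : -(1 / (b - lam)) * (Real.exp (-(b - lam) * s) * -(b - lam))
              = Real.exp (-((b - lam) * s)) := by
            have hne : (b - lam) ≠ 0 := by
              have : lam < b := hlamlt
              intro h; apply absurd h; linarith
            field_simp
          rw [← h3]
          exact h2
        have hint2 : IntervalIntegrable (fun s => Real.exp (-((b - lam) * s)))
            MeasureTheory.volume 0 t :=
          (Real.continuous_exp.comp (continuous_const.mul continuous_id).neg).intervalIntegrable _ _
        have heq := intervalIntegral.integral_eq_sub_of_hasDerivAt hder hint2
        rw [heq]
        have h4 : 0 < Real.exp (-(b - lam) * t) := Real.exp_pos _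
        have h5 : Real.exp (-(b - lam) * 0) = 1 := by norm_num
        rw [h5]
        have h6 : 0 < 1 / (b - lam) := by positivity
        nlinarith
      calc (c t)⁻¹ * (∫ s in (0:ℝ)..t, c s * ‖ε s‖)
          = ∫ s in (0:ℝ)..t, (c t)⁻¹ * (c s * ‖ε s‖) := by
            rw [← intervalIntegral.integral_const_mul]
        _ ≤ ∫ s in (0:ℝ)..t, (C * a * Real.exp (-lam * t)) * Real.exp (-((b - lam) * s)) := hmono
        _ = (C * a * Real.exp (-lam * t)) * ∫ s in (0:ℝ)..t, Real.exp (-((b - lam) * s)) := by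
            rw [intervalIntegral.integral_const_mul]
        _ ≤ (C * a * Real.exp (-lam * t)) * (1 / (b - lam)) := by
            apply mul_le_mul_of_nonneg_left hintexp (by positivity)
    calc ‖x t‖ ≤ (c t)⁻¹ * ‖x 0‖ + (c t)⁻¹ * ∫ s in (0:ℝ)..t, c s * ‖ε s‖ := hx2
      _ ≤ C * ‖x 0‖ * Real.exp (-lam * t) + C * a * Real.exp (-lam * t) * (1 / (b - lam)) :=
          add_le_add hterm1 hterm2
      _ = (C * (‖x 0‖ + a / (b - lam))) * Real.exp (-lam * t) := by
          field_simp
  -- conclude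
  set M : ℝ := C * (‖x 0‖ + a / (b - lam)) + 1 with hM
  have hblam : 0 < b - lam := by linarith
  have hMpos : 0 < M := by
    have h1 : 0 ≤ a / (b - lam) := by positivity
    have h2 : 0 ≤ C * (‖x 0‖ + a / (b - lam)) :=
      mul_nonneg hCpos.le (add_nonneg (norm_nonneg _) h1)
    rw [hM]
    linarith
  have hbd' : ∀ t ≥ (0:ℝ), ‖x t‖ ≤ M * Real.exp (-lam * t) := by
    intro t ht
    refine (hbd t ht).trans ?_
    have := Real.exp_pos (-lam * t)
    nlinarith
  refine ⟨⟨M, hMpos, lam, hlampos, hbd'⟩, ?_⟩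
  have htend : Tendsto (fun t : ℝ => M * Real.exp (-lam * t)) atTop (nhds 0) := by
    have h1 : Tendsto (fun t : ℝ => lam * t) atTop atTop :=
      Tendsto.const_mul_atTop hlampos tendsto_id
    have h2 : Tendsto (fun t : ℝ => Real.exp (-(lam * t))) atTop (nhds 0) :=
      Real.tendsto_exp_neg_atTop_nhds_zero.comp h1
    have h3 := h2.const_mul M
    rw [mul_zero] at h3
    refine h3.congr fun t => by rw [neg_mul]
  apply squeeze_zero_norm' _ htend
  filter_upwards [eventually_ge_atTop (0:ℝ)] with t ht
  exact hbd' t ht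
end
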